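/- arXiv:1504.01318 — 4 statements merged into one kernel-verified Lean document; each statement's English description precedes it below -/
import Mathlib

section
/- For any polynomial f and nonzero complex numbers a_1, a_2, the identity f(x - a_1 B_1 - a_2 B_2) = f(x + a_1 B_1 + a_2 B_2) + a_1 f'(x + a_2 B_2) + a_2 f'(x + a_1 B_1) + a_1 a_2 f''(x) holds, where evaluation at independent Bernoulli symbols B_1, B_2 means replacing each monomial B_1^i B_2^j by B_i B_j (products of Bernoulli numbers). Concretely, if f(y) = y^m, this reads: \sum_{i+j+k=m} \binom{m}{i,j,k} x^i (-a_1)^j (-a_2)^k B_j B_k = \sum_{i+j+k=m} \binom{m}{i,j,k} x^i a_1^j a_2^k B_j B_k + m a_1 \sum_{i+j=m-1} \binom{m-1}{i} x^i a_2^j B_j + m a_2 \sum_{i+j=m-1} \binom{m-1}{i} x^i a_1^j B_j + m(m-1) a_1 a_2 x^{m-2}. -/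
open Finset


lemma multi3 (i j k : ℕ) :
    Nat.multinomial Finset.univ ![i, j, k] = (i + j + k).choose i * (j + k).choose j := by
  have h : (Finset.univ : Finset (Fin 3)) = {0, 1, 2} := by decide
  rw [h]
  rw [Nat.multinomial_insert (by decide), Nat.multinomial_insert (by decide),
    Nat.multinomial_singleton]
  simp [Finset.sum_insert, add_assoc]

lemma triple (m : ℕ) (g : ℕ → ℕ → ℕ → ℂ) :
    ∑ p ∈ Finset.Nat.antidiagonalTuple 3 m,
      (Nat.multinomial Finset.univ p : ℂ) * g (p 0) (p 1) (p 2)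
    = ∑ ib ∈ Finset.HasAntidiagonal.antidiagonal m, ∑ jk ∈ Finset.HasAntidiagonal.antidiagonal ib.2,
        ((m.choose ib.1 * ib.2.choose jk.1 : ℕ) : ℂ) * g ib.1 jk.1 jk.2 := by
  rw [Finset.sum_sigma']
  refine Finset.sum_nbij' (fun p => ⟨(p 0, p 1 + p 2), (p 1, p 2)⟩)
    (fun q => ![q.1.1, q.2.1, q.2.2]) ?_ ?_ ?_ ?_ ?_
  · intro p hp
    simp only [Finset.Nat.mem_antidiagonalTuple, Fin.sum_univ_three] at hp
    simp [Finset.mem_sigma, Finset.HasAntidiagonal.mem_antidiagonal, ← hp, add_assoc]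
  · intro q hq
    obtain ⟨⟨a, b⟩, c, d⟩ := q
    simp only [Finset.mem_sigma, Finset.HasAntidiagonal.mem_antidiagonal] at hq
    simp only [Finset.Nat.mem_antidiagonalTuple, Fin.sum_univ_three]
    simp only [Matrix.cons_val_zero, Matrix.cons_val_one, Matrix.head_cons,
      Matrix.cons_val_two, Matrix.tail_cons]
    omega
  · intro p hp
    funext i
    fin_cases i <;> rfl
  · intro q hq
    obtain ⟨⟨a, b⟩, c, d⟩ := q
    simp only [Finset.mem_sigma, Finset.HasAntidiagonal.mem_antidiagonal] at hq
    simp [hq.2]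
  · intro p hp
    simp only [Finset.Nat.mem_antidiagonalTuple, Fin.sum_univ_three] at hp
    have hp3 : p = ![p 0, p 1, p 2] := by funext i; fin_cases i <;> rfl
    have e : Nat.multinomial Finset.univ p = m.choose (p 0) * (p 1 + p 2).choose (p 1) := by
      conv_lhs => rw [hp3]
      rw [multi3, hp]
    simp only [e]

lemma bern_neg (n : ℕ) :
    ((-1 : ℚ)) ^ n * bernoulli n = bernoulli n + if n = 1 then 1 else 0 := by
  by_cases h : n = 1
  · subst h; norm_num [bernoulli_one]
  · rw [if_neg h, add_zero]
    conv_lhs => rw [show bernoulli n = (-1) ^ n * bernoulli' n from rfl]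
    rw [← mul_assoc, ← mul_pow]
    simp [bernoulli_eq_bernoulli'_of_ne_one h]

lemma bern_negC (a : ℂ) (n : ℕ) :
    (-a) ^ n * (bernoulli n : ℂ) = a ^ n * ((bernoulli n : ℂ) + if n = 1 then 1 else 0) := by
  have := bern_neg n
  have h2 : ((-1 : ℚ) ^ n * bernoulli n : ℚ) = ((bernoulli n + if n = 1 then 1 else 0 : ℚ)) := this
  have h3 : ((-1 : ℂ)) ^ n * (bernoulli n : ℂ) = (bernoulli n : ℂ) + if n = 1 then 1 else 0 := by
    have := congrArg (Rat.cast : ℚ → ℂ) h2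
    push_cast at this
    split at this <;> split <;> simp_all
  calc (-a) ^ n * (bernoulli n : ℂ) = a ^ n * ((-1 : ℂ) ^ n * (bernoulli n : ℂ)) := by
        rw [neg_pow]; ring
    _ = _ := by rw [h3]

lemma inner1 (b : ℕ) (F : ℕ → ℕ → ℂ) :
    ∑ jk ∈ antidiagonal b, (if jk.1 = 1 then F jk.1 jk.2 else 0)
      = if b = 0 then 0 else F 1 (b - 1) := by
  rcases b with _ | n
  · simp
  · rw [if_neg (Nat.succ_ne_zero n)]
    rw [Finset.sum_eq_single_of_mem (1, n) (by rw [Finset.HasAntidiagonal.mem_antidiagonal]; omega)]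
    · simp
    · rintro ⟨j, k⟩ hmem hne
      rw [Finset.HasAntidiagonal.mem_antidiagonal] at hmem
      have : ¬ j = 1 := by rintro rfl; exact hne (by simp; omega)
      simp [this]

lemma inner2 (b : ℕ) (F : ℕ → ℕ → ℂ) :
    ∑ jk ∈ antidiagonal b, (if jk.2 = 1 then F jk.1 jk.2 else 0)
      = if b = 0 then 0 else F (b - 1) 1 := by
  rcases b with _ | n
  · simp
  · rw [if_neg (Nat.succ_ne_zero n)]
    rw [Finset.sum_eq_single_of_mem (n, 1) (by rw [Finset.HasAntidiagonal.mem_antidiagonal])]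
    · simp
    · rintro ⟨j, k⟩ hmem hne
      rw [Finset.HasAntidiagonal.mem_antidiagonal] at hmem
      have : ¬ k = 1 := by rintro rfl; exact hne (by simp; omega)
      simp [this]

lemma inner3 (b : ℕ) (F : ℕ → ℕ → ℂ) :
    ∑ jk ∈ antidiagonal b, (if jk.1 = 1 ∧ jk.2 = 1 then F jk.1 jk.2 else 0)
      = if b = 2 then F 1 1 else 0 := by
  by_cases hb : b = 2
  · subst hb
    rw [if_pos rfl, Finset.sum_eq_single_of_mem (1, 1) (by rw [Finset.HasAntidiagonal.mem_antidiagonal]; omega)]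
    · simp
    · rintro ⟨j, k⟩ hmem hne
      rw [Finset.HasAntidiagonal.mem_antidiagonal] at hmem
      have : ¬ (j = 1 ∧ k = 1) := by rintro ⟨rfl, rfl⟩; exact hne rfl
      simp [this]
  · rw [if_neg hb]
    apply Finset.sum_eq_zero
    rintro ⟨j, k⟩ hmem
    rw [Finset.HasAntidiagonal.mem_antidiagonal] at hmem
    have : ¬ (j = 1 ∧ k = 1) := by rintro ⟨rfl, rfl⟩; exact hb (by omega)
    simp [this]

lemma chooseid (n i j : ℕ) (h : i + j = n) :
    (n + 1).choose i * (j + 1) = (n + 1) * n.choose i := by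
  have h1 : j + 1 = n + 1 - i := by omega
  rw [h1, ← Nat.choose_succ_right_eq, ← Nat.add_one_mul_choose_eq]

lemma pointid (c x a₁ a₂ : ℂ) (i j k : ℕ) :
    c * (x ^ i * (-a₁) ^ j * (-a₂) ^ k * (bernoulli j : ℂ) * (bernoulli k : ℂ))
    = c * (x ^ i * a₁ ^ j * a₂ ^ k * (bernoulli j : ℂ) * (bernoulli k : ℂ))
      + ((if j = 1 then c * (x ^ i * a₁ ^ j * a₂ ^ k * (bernoulli k : ℂ)) else 0)
      + ((if k = 1 then c * (x ^ i * a₁ ^ j * a₂ ^ k * (bernoulli j : ℂ)) else 0)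
      + (if j = 1 ∧ k = 1 then c * (x ^ i * a₁ ^ j * a₂ ^ k) else 0))) := by
  have e1 := bern_negC a₁ j
  have e2 := bern_negC a₂ k
  have step : c * (x ^ i * (-a₁) ^ j * (-a₂) ^ k * (bernoulli j : ℂ) * (bernoulli k : ℂ))
      = c * x ^ i * (a₁ ^ j * ((bernoulli j : ℂ) + if j = 1 then 1 else 0))
          * (a₂ ^ k * ((bernoulli k : ℂ) + if k = 1 then 1 else 0)) := by
    rw [← e1, ← e2]; ring
  rw [step]
  by_cases hj : j = 1 <;> by_cases hk : k = 1 <;> simp [hj, hk] <;> ring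

lemma T1val (n : ℕ) (x a₁ a₂ : ℂ) :
    ∑ ib ∈ antidiagonal (n + 1),
      (if ib.2 = 0 then (0 : ℂ)
        else (((n + 1).choose ib.1 * ib.2.choose 1 : ℕ) : ℂ) *
          (x ^ ib.1 * a₁ ^ 1 * a₂ ^ (ib.2 - 1) * (bernoulli (ib.2 - 1) : ℂ)))
    = ((n + 1 : ℕ) : ℂ) * a₁ * ∑ p ∈ antidiagonal n,
        ((n.choose p.1 : ℂ) * x ^ p.1 * a₂ ^ p.2 * (bernoulli p.2 : ℂ)) := by
  rw [Finset.Nat.antidiagonal_succ', Finset.sum_cons, if_pos rfl, zero_add, Finset.sum_map,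
    Finset.mul_sum]
  refine sum_congr rfl fun p hp => ?_
  rw [Finset.HasAntidiagonal.mem_antidiagonal] at hp
  simp only [Function.Embedding.prodMap, Function.Embedding.coeFn_mk, Prod.map,
    Function.Embedding.refl_apply]
  rw [if_neg (Nat.succ_ne_zero _)]
  rw [Nat.choose_one_right]
  rw [show p.2.succ = p.2 + 1 from rfl, chooseid n p.1 p.2 hp]
  push_cast
  ring

lemma T2val (n : ℕ) (x a₁ a₂ : ℂ) :
    ∑ ib ∈ antidiagonal (n + 1),
      (if ib.2 = 0 then (0 : ℂ)
        else (((n + 1).choose ib.1 * ib.2.choose (ib.2 - 1) : ℕ) : ℂ) *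
          (x ^ ib.1 * a₁ ^ (ib.2 - 1) * a₂ ^ 1 * (bernoulli (ib.2 - 1) : ℂ)))
    = ((n + 1 : ℕ) : ℂ) * a₂ * ∑ p ∈ antidiagonal n,
        ((n.choose p.1 : ℂ) * x ^ p.1 * a₁ ^ p.2 * (bernoulli p.2 : ℂ)) := by
  rw [Finset.Nat.antidiagonal_succ', Finset.sum_cons, if_pos rfl, zero_add, Finset.sum_map,
    Finset.mul_sum]
  refine sum_congr rfl fun p hp => ?_
  rw [Finset.HasAntidiagonal.mem_antidiagonal] at hp
  simp only [Function.Embedding.prodMap, Function.Embedding.coeFn_mk, Prod.map,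
    Function.Embedding.refl_apply]
  rw [if_neg (Nat.succ_ne_zero _)]
  rw [show p.2.succ = p.2 + 1 from rfl, Nat.add_sub_cancel, Nat.choose_succ_self_right,
    chooseid n p.1 p.2 hp]
  push_cast
  ring

lemma c2 (m : ℕ) (hm : 2 ≤ m) : m.choose (m - 2) * 2 = m * (m - 1) := by
  rw [Nat.choose_symm hm]
  have h := Nat.choose_succ_right_eq m 1
  simpa [Nat.choose_one_right] using h

lemma T3val (n : ℕ) (hn : 1 ≤ n) (x a₁ a₂ : ℂ) :
    ∑ ib ∈ antidiagonal (n + 1),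
      (if ib.2 = 2 then (((n + 1).choose ib.1 * ib.2.choose 1 : ℕ) : ℂ) *
          (x ^ ib.1 * a₁ ^ 1 * a₂ ^ 1) else 0)
    = ((n + 1 : ℕ) : ℂ) * (((n + 1 : ℕ) : ℂ) - 1) * a₁ * a₂ * x ^ (n - 1) := by
  rw [Finset.sum_eq_single_of_mem (n - 1, 2) (by rw [Finset.HasAntidiagonal.mem_antidiagonal]; omega)]
  · rw [if_pos rfl]
    have h2 : 2 ≤ n + 1 := by omega
    have : (n + 1).choose (n - 1) * 2 = (n + 1) * n := by
      have := c2 (n + 1) h2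
      simpa [Nat.add_sub_cancel, show n + 1 - 2 = n - 1 by omega] using this
    rw [show ((2 : ℕ).choose 1) = 2 from rfl, this]
    have : ((n : ℂ) + 1 - 1) = (n : ℂ) := by ring
    push_cast
    ring
  · rintro ⟨i, b⟩ hmem hne
    rw [Finset.HasAntidiagonal.mem_antidiagonal] at hmem
    have : ¬ b = 2 := by rintro rfl; exact hne (by simp; omega)
    simp [this]


/-- The symbolic identity `f(x - a₁𝓑₁ - a₂𝓑₂) = f(x + a₁𝓑₁ + a₂𝓑₂) + a₁ f'(x + a₂𝓑₂)
+ a₂ f'(x + a₁𝓑₁) + a₁a₂ f''(x)` for `f(y) = y^m`, written out with umbral evaluation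
(`𝓑ᵢ^j ↦ B_j`, the Bernoulli numbers). -/
theorem symbolic_two_bernoulli (m : ℕ) (hm : 2 ≤ m) (x a₁ a₂ : ℂ) (h₁ : a₁ ≠ 0) (h₂ : a₂ ≠ 0) :
    (∑ p ∈ Finset.Nat.antidiagonalTuple 3 m,
        (Nat.multinomial Finset.univ p : ℂ) * x ^ (p 0) * (-a₁) ^ (p 1) * (-a₂) ^ (p 2) *
          (bernoulli (p 1) : ℂ) * (bernoulli (p 2) : ℂ)) =
      (∑ p ∈ Finset.Nat.antidiagonalTuple 3 m,
        (Nat.multinomial Finset.univ p : ℂ) * x ^ (p 0) * a₁ ^ (p 1) * a₂ ^ (p 2) *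
          (bernoulli (p 1) : ℂ) * (bernoulli (p 2) : ℂ)) +
      (m : ℂ) * a₁ * (∑ p ∈ Finset.HasAntidiagonal.antidiagonal (m - 1),
        ((m - 1).choose p.1 : ℂ) * x ^ p.1 * a₂ ^ p.2 * (bernoulli p.2 : ℂ)) +
      (m : ℂ) * a₂ * (∑ p ∈ Finset.HasAntidiagonal.antidiagonal (m - 1),
        ((m - 1).choose p.1 : ℂ) * x ^ p.1 * a₁ ^ p.2 * (bernoulli p.2 : ℂ)) +
      (m : ℂ) * ((m : ℂ) - 1) * a₁ * a₂ * x ^ (m - 2) := by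
  obtain ⟨n, rfl⟩ : ∃ n, m = n + 1 := ⟨m - 1, by omega⟩
  have hn : 1 ≤ n := by omega
  -- reindex the left-hand triple sum
  have L1 : (∑ p ∈ Finset.Nat.antidiagonalTuple 3 (n + 1),
        (Nat.multinomial Finset.univ p : ℂ) * x ^ (p 0) * (-a₁) ^ (p 1) * (-a₂) ^ (p 2) *
          (bernoulli (p 1) : ℂ) * (bernoulli (p 2) : ℂ))
      = ∑ ib ∈ antidiagonal (n + 1), ∑ jk ∈ antidiagonal ib.2,
          (((n + 1).choose ib.1 * ib.2.choose jk.1 : ℕ) : ℂ) *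
            (x ^ ib.1 * (-a₁) ^ jk.1 * (-a₂) ^ jk.2 * (bernoulli jk.1 : ℂ) *
              (bernoulli jk.2 : ℂ)) :=
    (sum_congr rfl fun p _ => by ring).trans
      (triple (n + 1) fun i j k =>
        x ^ i * (-a₁) ^ j * (-a₂) ^ k * (bernoulli j : ℂ) * (bernoulli k : ℂ))
  -- reindex the right-hand triple sum
  have R1 : (∑ p ∈ Finset.Nat.antidiagonalTuple 3 (n + 1),
        (Nat.multinomial Finset.univ p : ℂ) * x ^ (p 0) * a₁ ^ (p 1) * a₂ ^ (p 2) *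
          (bernoulli (p 1) : ℂ) * (bernoulli (p 2) : ℂ))
      = ∑ ib ∈ antidiagonal (n + 1), ∑ jk ∈ antidiagonal ib.2,
          (((n + 1).choose ib.1 * ib.2.choose jk.1 : ℕ) : ℂ) *
            (x ^ ib.1 * a₁ ^ jk.1 * a₂ ^ jk.2 * (bernoulli jk.1 : ℂ) *
              (bernoulli jk.2 : ℂ)) :=
    (sum_congr rfl fun p _ => by ring).trans
      (triple (n + 1) fun i j k =>
        x ^ i * a₁ ^ j * a₂ ^ k * (bernoulli j : ℂ) * (bernoulli k : ℂ))
  -- expand the left double sum into four pieces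
  have expansion : (∑ ib ∈ antidiagonal (n + 1), ∑ jk ∈ antidiagonal ib.2,
          (((n + 1).choose ib.1 * ib.2.choose jk.1 : ℕ) : ℂ) *
            (x ^ ib.1 * (-a₁) ^ jk.1 * (-a₂) ^ jk.2 * (bernoulli jk.1 : ℂ) *
              (bernoulli jk.2 : ℂ)))
      = (∑ ib ∈ antidiagonal (n + 1), ∑ jk ∈ antidiagonal ib.2,
          (((n + 1).choose ib.1 * ib.2.choose jk.1 : ℕ) : ℂ) *
            (x ^ ib.1 * a₁ ^ jk.1 * a₂ ^ jk.2 * (bernoulli jk.1 : ℂ) * (bernoulli jk.2 : ℂ)))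
        + ((∑ ib ∈ antidiagonal (n + 1), ∑ jk ∈ antidiagonal ib.2,
            (if jk.1 = 1 then (((n + 1).choose ib.1 * ib.2.choose jk.1 : ℕ) : ℂ) *
              (x ^ ib.1 * a₁ ^ jk.1 * a₂ ^ jk.2 * (bernoulli jk.2 : ℂ)) else 0))
        + ((∑ ib ∈ antidiagonal (n + 1), ∑ jk ∈ antidiagonal ib.2,
            (if jk.2 = 1 then (((n + 1).choose ib.1 * ib.2.choose jk.1 : ℕ) : ℂ) *
              (x ^ ib.1 * a₁ ^ jk.1 * a₂ ^ jk.2 * (bernoulli jk.1 : ℂ)) else 0))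
        + (∑ ib ∈ antidiagonal (n + 1), ∑ jk ∈ antidiagonal ib.2,
            (if jk.1 = 1 ∧ jk.2 = 1 then (((n + 1).choose ib.1 * ib.2.choose jk.1 : ℕ) : ℂ) *
              (x ^ ib.1 * a₁ ^ jk.1 * a₂ ^ jk.2) else 0)))) := by
    simp only [← Finset.sum_add_distrib]
    exact sum_congr rfl fun ib _ => sum_congr rfl fun jk _ =>
      pointid _ x a₁ a₂ ib.1 jk.1 jk.2
  -- evaluate the three correction double sums
  have hT1 : (∑ ib ∈ antidiagonal (n + 1), ∑ jk ∈ antidiagonal ib.2,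
        (if jk.1 = 1 then (((n + 1).choose ib.1 * ib.2.choose jk.1 : ℕ) : ℂ) *
          (x ^ ib.1 * a₁ ^ jk.1 * a₂ ^ jk.2 * (bernoulli jk.2 : ℂ)) else 0))
      = ((n + 1 : ℕ) : ℂ) * a₁ * ∑ p ∈ antidiagonal n,
          ((n.choose p.1 : ℂ) * x ^ p.1 * a₂ ^ p.2 * (bernoulli p.2 : ℂ)) :=
    (sum_congr rfl fun ib _ => inner1 ib.2 fun j k =>
      (((n + 1).choose ib.1 * ib.2.choose j : ℕ) : ℂ) *
        (x ^ ib.1 * a₁ ^ j * a₂ ^ k * (bernoulli k : ℂ))).trans (T1val n x a₁ a₂)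
  have hT2 : (∑ ib ∈ antidiagonal (n + 1), ∑ jk ∈ antidiagonal ib.2,
        (if jk.2 = 1 then (((n + 1).choose ib.1 * ib.2.choose jk.1 : ℕ) : ℂ) *
          (x ^ ib.1 * a₁ ^ jk.1 * a₂ ^ jk.2 * (bernoulli jk.1 : ℂ)) else 0))
      = ((n + 1 : ℕ) : ℂ) * a₂ * ∑ p ∈ antidiagonal n,
          ((n.choose p.1 : ℂ) * x ^ p.1 * a₁ ^ p.2 * (bernoulli p.2 : ℂ)) :=
    (sum_congr rfl fun ib _ => inner2 ib.2 fun j k =>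
      (((n + 1).choose ib.1 * ib.2.choose j : ℕ) : ℂ) *
        (x ^ ib.1 * a₁ ^ j * a₂ ^ k * (bernoulli j : ℂ))).trans (T2val n x a₁ a₂)
  have hT3 : (∑ ib ∈ antidiagonal (n + 1), ∑ jk ∈ antidiagonal ib.2,
        (if jk.1 = 1 ∧ jk.2 = 1 then (((n + 1).choose ib.1 * ib.2.choose jk.1 : ℕ) : ℂ) *
          (x ^ ib.1 * a₁ ^ jk.1 * a₂ ^ jk.2) else 0))
      = ((n + 1 : ℕ) : ℂ) * (((n + 1 : ℕ) : ℂ) - 1) * a₁ * a₂ * x ^ (n - 1) :=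
    (sum_congr rfl fun ib _ => inner3 ib.2 fun j k =>
      (((n + 1).choose ib.1 * ib.2.choose j : ℕ) : ℂ) *
        (x ^ ib.1 * a₁ ^ j * a₂ ^ k)).trans (T3val n hn x a₁ a₂)
  rw [L1, R1, expansion, hT1, hT2, hT3, Nat.add_sub_cancel,
    show n + 1 - 2 = n - 1 by omega]
  ring
end

section
/- Let a = (a_1,...,a_n) \in \mathbb{R}^n with all a_i \neq 0 and A = a_1 + ... + a_n \neq 0. Then for all integers l, m \geq 0 and all x: (-1)^m \sum_{k=0}^{m} \binom{m}{k} A^{m-k} B_{l+k}(x; a) = (-1)^l \sum_{k=0}^{l} \binom{l}{k} A^{l-k} B_{m+k}(-x; a). -/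
open PowerSeries

/-- The power series `(e^{a z} - 1)/z = ∑_k a^k z^k/(k+1)!`. -/
noncomputable def egfShift (a : ℝ) : PowerSeries ℝ :=
  PowerSeries.mk fun k => a ^ k / (Nat.factorial (k + 1) : ℝ)

/-- The power series `e^{x z} = ∑_k x^k z^k/k!`. -/
noncomputable def expPS (x : ℝ) : PowerSeries ℝ :=
  PowerSeries.mk fun k => x ^ k / (Nat.factorial k : ℝ)

/-- The Bernoulli-Barnes polynomials `B_m(x; a)`. -/
noncomputable def barnesPoly {n : ℕ} (a : Fin n → ℝ) (x : ℝ) (m : ℕ) : ℝ :=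
  (Nat.factorial m : ℝ) * PowerSeries.coeff m (expPS x * ∏ j, (egfShift (a j))⁻¹)

lemma expPS_eq (x : ℝ) : expPS x = rescale x (PowerSeries.exp ℝ) := by
  ext k
  simp [expPS, coeff_rescale, PowerSeries.coeff_exp, div_eq_mul_inv, mul_comm]

lemma expPS_mul (x y : ℝ) : expPS x * expPS y = expPS (x + y) := by
  rw [expPS_eq, expPS_eq, expPS_eq, PowerSeries.exp_mul_exp_eq_exp_add]

lemma expPS_zero : expPS 0 = 1 := by
  rw [expPS_eq, rescale_zero]
  simp

lemma constantCoeff_egfShift (a : ℝ) : constantCoeff (egfShift a) = 1 := by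
  rw [← coeff_zero_eq_constantCoeff_apply]
  simp [egfShift]

lemma constantCoeff_rescale' (c : ℝ) (f : PowerSeries ℝ) :
    constantCoeff (rescale c f) = constantCoeff f := by
  rw [← coeff_zero_eq_constantCoeff_apply, ← coeff_zero_eq_constantCoeff_apply, coeff_rescale]
  simp

lemma CX_egfShift (a : ℝ) : C a * X * egfShift a = rescale a (PowerSeries.exp ℝ) - 1 := by
  ext k
  cases k with
  | zero =>
    simp [coeff_rescale, PowerSeries.coeff_exp, mul_assoc, PowerSeries.coeff_zero_eq_constantCoeff, constantCoeff_rescale', PowerSeries.constantCoeff_exp]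
  | succ k =>
    rw [mul_assoc, coeff_C_mul, PowerSeries.coeff_succ_X_mul]
    simp [egfShift, coeff_rescale, PowerSeries.coeff_exp, div_eq_mul_inv, pow_succ, Nat.factorial]
    ring

lemma egfShift_refl (a : ℝ) (ha : a ≠ 0) : egfShift (-a) * expPS a = egfShift a := by
  have hX : (C (-a) * X : PowerSeries ℝ) ≠ 0 := by
    intro h
    have := congrArg (coeff 1) h
    simp [coeff_C_mul] at this
    exact ha this
  apply mul_left_cancel₀ hX
  have h2 : rescale (0:ℝ) (PowerSeries.exp ℝ) = 1 := by
    rw [rescale_zero]; simp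
  have hL : C (-a) * X * (egfShift (-a) * expPS a) = 1 - rescale a (PowerSeries.exp ℝ) := by
    have h1 : C (-a) * X * (egfShift (-a) * expPS a)
        = (C (-a) * X * egfShift (-a)) * expPS a := by ring
    rw [h1, CX_egfShift, expPS_eq, sub_mul, one_mul,
      PowerSeries.exp_mul_exp_eq_exp_add, neg_add_cancel, h2]
  have hR : C (-a) * X * egfShift a = 1 - rescale a (PowerSeries.exp ℝ) := by
    have h3 : C (-a) * X * egfShift a = -(C a * X * egfShift a) := by
      rw [map_neg]; ring
    rw [h3, CX_egfShift]; ring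
  rw [hL, hR]

lemma rescale_neg_egfShift (a : ℝ) : rescale (-1) (egfShift a) = egfShift (-a) := by
  ext k
  rw [coeff_rescale]
  simp only [egfShift, coeff_mk]
  rw [neg_pow]
  ring

lemma rescale_neg_inv (φ : PowerSeries ℝ) (h : constantCoeff φ ≠ 0) :
    rescale (-1) φ⁻¹ = (rescale (-1) φ)⁻¹ := by
  rw [PowerSeries.eq_inv_iff_mul_eq_one (by rw [constantCoeff_rescale']; exact h),
    ← map_mul, PowerSeries.inv_mul_cancel _ h, map_one]

lemma inv_egfShift_neg (a : ℝ) (ha : a ≠ 0) :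
    (egfShift (-a))⁻¹ = expPS a * (egfShift a)⁻¹ := by
  rw [PowerSeries.inv_eq_iff_mul_eq_one (by rw [constantCoeff_egfShift]; exact one_ne_zero)]
  have : expPS a * (egfShift a)⁻¹ * egfShift (-a)
        = (egfShift a)⁻¹ * (egfShift (-a) * expPS a) := by ring
  rw [this, egfShift_refl a ha, PowerSeries.inv_mul_cancel]
  rw [constantCoeff_egfShift]; exact one_ne_zero

lemma prod_expPS {ι : Type*} (s : Finset ι) (f : ι → ℝ) :
    ∏ j ∈ s, expPS (f j) = expPS (∑ j ∈ s, f j) := by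
  induction s using Finset.cons_induction with
  | empty => simp [expPS_zero]
  | cons i s hi ih => rw [Finset.prod_cons, Finset.sum_cons, ih, expPS_mul]

lemma rescale_neg_prod {n : ℕ} (a : Fin n → ℝ) (ha : ∀ i, a i ≠ 0) :
    rescale (-1) (∏ j, (egfShift (a j))⁻¹)
      = expPS (∑ i, a i) * ∏ j, (egfShift (a j))⁻¹ := by
  rw [map_prod]
  have : ∀ j : Fin n, rescale (-1) (egfShift (a j))⁻¹
      = expPS (a j) * (egfShift (a j))⁻¹ := by
    intro j
    rw [rescale_neg_inv _ (by rw [constantCoeff_egfShift]; exact one_ne_zero),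
      rescale_neg_egfShift, inv_egfShift_neg _ (ha j)]
  rw [Finset.prod_congr rfl (fun j _ => this j), Finset.prod_mul_distrib, prod_expPS]

lemma rescale_neg_expPS (y : ℝ) : rescale (-1) (expPS y) = expPS (-y) := by
  rw [expPS_eq, rescale_rescale, mul_neg_one, ← expPS_eq]

lemma barnes_reflect {n : ℕ} (a : Fin n → ℝ) (ha : ∀ i, a i ≠ 0) (x : ℝ) (j : ℕ) :
    barnesPoly a (-x) j = (-1) ^ j * barnesPoly a (x + ∑ i, a i) j := by
  have key : expPS (-x) * ∏ i, (egfShift (a i))⁻¹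
      = rescale (-1) (expPS (x + ∑ i, a i) * ∏ i, (egfShift (a i))⁻¹) := by
    rw [map_mul, rescale_neg_expPS, rescale_neg_prod a ha, ← mul_assoc, expPS_mul]
    ring_nf
  rw [barnesPoly, key, coeff_rescale, barnesPoly]
  ring

lemma barnes_shift {n : ℕ} (a : Fin n → ℝ) (x A : ℝ) (j : ℕ) :
    barnesPoly a (x + A) j
      = ∑ i ∈ Finset.range (j + 1), (j.choose i : ℝ) * A ^ (j - i) * barnesPoly a x i := by
  have key : expPS (x + A) * ∏ i, (egfShift (a i))⁻¹
      = (expPS x * ∏ i, (egfShift (a i))⁻¹) * expPS A := by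
    rw [← expPS_mul]; ring
  rw [barnesPoly, key, PowerSeries.coeff_mul, Finset.Nat.sum_antidiagonal_eq_sum_range_succ_mk,
    Finset.mul_sum]
  refine Finset.sum_congr rfl fun i hi => ?_
  rw [Finset.mem_range] at hi
  have hij : i ≤ j := Nat.lt_succ_iff.mp hi
  rw [barnesPoly]
  have hfact : (j.factorial : ℝ) = (j.choose i : ℝ) * i.factorial * (j - i).factorial := by
    rw [← Nat.cast_mul, ← Nat.cast_mul, Nat.choose_mul_factorial_mul_factorial hij]
  simp only [expPS, coeff_mk]
  rw [hfact]
  have h1 : ((j - i).factorial : ℝ) ≠ 0 := Nat.cast_ne_zero.mpr (Nat.factorial_ne_zero _)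
  field_simp

lemma FD : ∀ (l m j : ℕ), ∑ k ∈ Finset.range (l + 1),
      (-1 : ℝ) ^ k * (l.choose k) * ((m + k).choose j)
    = (-1) ^ l * (if l ≤ j then ((m.choose (j - l)) : ℝ) else 0) := by
  intro l
  induction l with
  | zero => intro m j; simp
  | succ l ih =>
    intro m j
    have hrec : ∑ k ∈ Finset.range (l + 2), (-1 : ℝ) ^ k * ((l + 1).choose k) * ((m + k).choose j)
        = (∑ k ∈ Finset.range (l + 1), (-1 : ℝ) ^ k * (l.choose k) * ((m + k).choose j))
          - ∑ k ∈ Finset.range (l + 1), (-1 : ℝ) ^ k * (l.choose k) * ((m + 1 + k).choose j) := by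
      rw [Finset.sum_range_succ' _ (l + 1)]
      have e1 : ∀ k, ((l + 1).choose (k + 1) : ℝ) = (l.choose k : ℝ) + (l.choose (k + 1) : ℝ) := by
        intro k; rw [← Nat.cast_add, Nat.choose_succ_succ]
      have split : ∑ k ∈ Finset.range (l + 1),
            (-1 : ℝ) ^ (k + 1) * ((l + 1).choose (k + 1)) * ((m + (k + 1)).choose j)
          = -(∑ k ∈ Finset.range (l + 1), (-1 : ℝ) ^ k * (l.choose k) * ((m + 1 + k).choose j))
            - ∑ k ∈ Finset.range (l + 1),
                (-1 : ℝ) ^ k * (l.choose (k + 1)) * ((m + (k + 1)).choose j) := by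
        rw [← Finset.sum_neg_distrib, ← Finset.sum_sub_distrib]
        refine Finset.sum_congr rfl fun k _ => ?_
        rw [e1 k]
        have : m + (k + 1) = m + 1 + k := by ring
        rw [this]
        ring
      rw [split]
      have last0 : (l.choose (l + 1) : ℝ) = 0 := by
        rw [Nat.choose_eq_zero_of_lt (Nat.lt_succ_self l)]; norm_num
      have e2 : ∑ k ∈ Finset.range (l + 1), (-1 : ℝ) ^ k * (l.choose (k + 1)) * ((m + (k + 1)).choose j)
          = ∑ k ∈ Finset.range l, (-1 : ℝ) ^ k * (l.choose (k + 1)) * ((m + (k + 1)).choose j) := by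
        rw [Finset.sum_range_succ, last0]
        ring
      have e3 : ∑ k ∈ Finset.range (l + 1), (-1 : ℝ) ^ k * (l.choose k) * ((m + k).choose j)
          = (∑ k ∈ Finset.range l, (-1 : ℝ) ^ (k + 1) * (l.choose (k + 1)) * ((m + (k + 1)).choose j))
            + (-1 : ℝ) ^ 0 * (l.choose 0) * ((m + 0).choose j) := Finset.sum_range_succ' _ l
      have e4 : ∑ k ∈ Finset.range l, (-1 : ℝ) ^ (k + 1) * (l.choose (k + 1)) * ((m + (k + 1)).choose j)
          = -∑ k ∈ Finset.range l, (-1 : ℝ) ^ k * (l.choose (k + 1)) * ((m + (k + 1)).choose j) := by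
        rw [← Finset.sum_neg_distrib]
        exact Finset.sum_congr rfl fun k _ => by ring
      rw [e2, e3, e4]
      simp
      ring
    rw [hrec, ih m j, ih (m + 1) j]
    by_cases h1 : l + 1 ≤ j
    · have h0 : l ≤ j := Nat.le_of_succ_le h1
      obtain ⟨t, ht⟩ : ∃ t, j - l = t + 1 := ⟨j - (l + 1), by omega⟩
      have ht' : j - (l + 1) = t := by omega
      rw [if_pos h0, if_pos h0, if_pos h1, ht, ht']
      have : ((m + 1).choose (t + 1) : ℝ) = (m.choose t : ℝ) + (m.choose (t + 1) : ℝ) := by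
        rw [← Nat.cast_add, Nat.choose_succ_succ]
      rw [this]
      ring
    · by_cases h0 : l ≤ j
      · have hj : j = l := by omega
        rw [if_pos h0, if_pos h0, if_neg h1, hj]
        simp
      · rw [if_neg h0, if_neg h0, if_neg h1]
        ring

lemma core (c : ℕ → ℝ) (A : ℝ) (hA0 : A ≠ 0) (l m : ℕ) :
    ∑ k ∈ Finset.range (m + 1), (m.choose k : ℝ) * A ^ (m - k) * c (l + k)
      = ∑ k ∈ Finset.range (l + 1), (-1 : ℝ) ^ l * (-1) ^ k * (l.choose k : ℝ) * A ^ (l - k) *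
          ∑ i ∈ Finset.range (m + k + 1), ((m + k).choose i : ℝ) * A ^ (m + k - i) * c i := by
  have hpow : ∀ (p i : ℕ), ((p.choose i : ℝ)) * A ^ (p - i) = (p.choose i : ℝ) * A ^ p / A ^ i := by
    intro p i
    by_cases h : i ≤ p
    · rw [pow_sub₀ A hA0 h]; ring
    · rw [Nat.choose_eq_zero_of_lt (not_le.mp h)]; simp
  -- rewrite RHS
  have step1 : ∀ k, k ∈ Finset.range (l + 1) →
      (-1 : ℝ) ^ l * (-1) ^ k * (l.choose k : ℝ) * A ^ (l - k) *
          ∑ i ∈ Finset.range (m + k + 1), ((m + k).choose i : ℝ) * A ^ (m + k - i) * c i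
        = ∑ i ∈ Finset.range (m + l + 1),
            (-1 : ℝ) ^ l * ((-1) ^ k * (l.choose k : ℝ) * ((m + k).choose i : ℝ))
              * (A ^ (l + m) / A ^ i) * c i := by
    intro k hk
    rw [Finset.mem_range] at hk
    have hkl : k ≤ l := Nat.lt_succ_iff.mp hk
    have ext : ∑ i ∈ Finset.range (m + k + 1), ((m + k).choose i : ℝ) * A ^ (m + k - i) * c i
        = ∑ i ∈ Finset.range (m + l + 1), ((m + k).choose i : ℝ) * A ^ (m + k - i) * c i := by
      refine Finset.sum_subset (by intro i hi; rw [Finset.mem_range] at hi ⊢; omega) ?_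
      intro i hi hni
      rw [Finset.mem_range] at hi hni
      rw [Nat.choose_eq_zero_of_lt (by omega)]
      simp
    rw [ext, Finset.mul_sum]
    refine Finset.sum_congr rfl fun i hi => ?_
    rw [hpow (m + k) i]
    have hAl : A ^ (l - k) = A ^ l / A ^ k := pow_sub₀ A hA0 hkl
    rw [hAl]
    field_simp
    ring
  conv_rhs => rw [Finset.sum_congr rfl step1, Finset.sum_comm]
  -- now inner sum over k is FD
  have step2 : ∀ i, i ∈ Finset.range (m + l + 1) →
      ∑ k ∈ Finset.range (l + 1),
          (-1 : ℝ) ^ l * ((-1) ^ k * (l.choose k : ℝ) * ((m + k).choose i : ℝ))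
            * (A ^ (l + m) / A ^ i) * c i
        = (if l ≤ i then ((m.choose (i - l)) : ℝ) else 0) * (A ^ (l + m) / A ^ i) * c i := by
    intro i _
    have := FD l m i
    calc ∑ k ∈ Finset.range (l + 1),
          (-1 : ℝ) ^ l * ((-1) ^ k * (l.choose k : ℝ) * ((m + k).choose i : ℝ))
            * (A ^ (l + m) / A ^ i) * c i
        = ((-1 : ℝ) ^ l * ∑ k ∈ Finset.range (l + 1),
            (-1 : ℝ) ^ k * (l.choose k : ℝ) * ((m + k).choose i : ℝ))
            * (A ^ (l + m) / A ^ i) * c i := by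
          rw [Finset.mul_sum, Finset.sum_mul, Finset.sum_mul]
      _ = ((-1 : ℝ) ^ l * ((-1 : ℝ) ^ l * (if l ≤ i then ((m.choose (i - l)) : ℝ) else 0)))
            * (A ^ (l + m) / A ^ i) * c i := by rw [this]
      _ = (if l ≤ i then ((m.choose (i - l)) : ℝ) else 0) * (A ^ (l + m) / A ^ i) * c i := by
          rw [← mul_assoc, ← mul_pow]
          simp
  conv_rhs => rw [Finset.sum_congr rfl step2]
  -- reindex: i = l + k
  have hsplit : (m + l + 1) = l + (m + 1) := by ring
  conv_rhs => rw [hsplit, Finset.sum_range_add]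
  have first0 : ∑ i ∈ Finset.range l,
      (if l ≤ i then ((m.choose (i - l)) : ℝ) else 0) * (A ^ (l + m) / A ^ i) * c i = 0 := by
    refine Finset.sum_eq_zero fun i hi => ?_
    rw [Finset.mem_range] at hi
    rw [if_neg (by omega)]
    ring
  rw [first0, zero_add]
  refine Finset.sum_congr rfl fun k hk => ?_
  rw [Finset.mem_range] at hk
  have hkm : k ≤ m := Nat.lt_succ_iff.mp hk
  rw [if_pos (Nat.le_add_right l k)]
  have : l + k - l = k := by omega
  rw [this]
  rw [pow_sub₀ A hA0 hkm, pow_add, pow_add]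
  field_simp

/-- `(-1)^m ∑_{k=0}^m (m choose k) A^{m-k} B_{l+k}(x;a)
   = (-1)^l ∑_{k=0}^l (l choose k) A^{l-k} B_{m+k}(-x;a)`. -/
theorem barnesPoly_symmetry_sum {n : ℕ} (a : Fin n → ℝ) (ha : ∀ i, a i ≠ 0)
    (A : ℝ) (hA : A = ∑ i, a i) (hA0 : A ≠ 0) (l m : ℕ) (x : ℝ) :
    (-1 : ℝ) ^ m * ∑ k ∈ Finset.range (m + 1),
        (m.choose k : ℝ) * A ^ (m - k) * barnesPoly a x (l + k) =
      (-1 : ℝ) ^ l * ∑ k ∈ Finset.range (l + 1),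
        (l.choose k : ℝ) * A ^ (l - k) * barnesPoly a (-x) (m + k) := by
  have hrefl : ∀ j : ℕ, barnesPoly a (-x) j
      = (-1 : ℝ) ^ j * ∑ i ∈ Finset.range (j + 1),
          (j.choose i : ℝ) * A ^ (j - i) * barnesPoly a x i := by
    intro j
    rw [barnes_reflect a ha x j, ← hA, barnes_shift a x A j]
  have hs : (∑ k ∈ Finset.range (l + 1),
        (l.choose k : ℝ) * A ^ (l - k) * barnesPoly a (-x) (m + k))
      = ∑ k ∈ Finset.range (l + 1), (l.choose k : ℝ) * A ^ (l - k) *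
          ((-1 : ℝ) ^ (m + k) * ∑ i ∈ Finset.range (m + k + 1),
            ((m + k).choose i : ℝ) * A ^ (m + k - i) * barnesPoly a x i) :=
    Finset.sum_congr rfl fun k _ => by rw [hrefl (m + k)]
  rw [hs, core (fun i => barnesPoly a x i) A hA0 l m, Finset.mul_sum, Finset.mul_sum]
  refine Finset.sum_congr rfl fun k _ => ?_
  rw [pow_add]
  ring
end

section
/- For all complex (or real) x, y and every integer m \geq 0, the polynomial identity -(m+1) y^m (2 y^{m+1} - (x+y)^m (x+2y)) = \sum_{k=0}^{m} \binom{m+1}{k} (m+k+1) x^{m+1-k} y^{m+k} holds. -/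
open Finset

/-- The elementary polynomial identity
`-(m+1) y^m (2y^{m+1} - (x+y)^m (x+2y)) = ∑_{k=0}^m (m+1 choose k)(m+k+1) x^{m+1-k} y^{m+k}`. -/
theorem elementary_poly_identity (m : ℕ) (x y : ℂ) :
    -((m : ℂ) + 1) * y ^ m * (2 * y ^ (m + 1) - (x + y) ^ m * (x + 2 * y)) =
      ∑ k ∈ Finset.range (m + 1),
        ((m + 1).choose k : ℂ) * ((m : ℂ) + k + 1) * x ^ (m + 1 - k) * y ^ (m + k) := by
  have hpow : (x + y) ^ m = ∑ k ∈ range (m + 1), y ^ k * x ^ (m - k) * (m.choose k : ℂ) := by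
    rw [add_comm x y, add_pow]
  -- coefficient identity termwise on the RHS
  have hcoef : ∀ k ∈ range (m + 1),
      ((m + 1).choose k : ℂ) * ((m : ℂ) + k + 1) * x ^ (m + 1 - k) * y ^ (m + k)
        = ((m : ℂ) + 1) * (m.choose k : ℂ) * x ^ (m + 1 - k) * y ^ (m + k)
          + 2 * (k : ℂ) * ((m + 1).choose k : ℂ) * x ^ (m + 1 - k) * y ^ (m + k) := by
    intro k hk
    rw [mem_range] at hk
    have hnat : (m.choose k) * (m + 1) = (m + 1).choose k * (m + 1 - k) :=
      Nat.choose_mul_succ_eq m k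
    have hc : ((m : ℂ) + 1) * (m.choose k : ℂ) = ((m + 1).choose k : ℂ) * ((m : ℂ) + 1 - k) := by
      have h := congrArg (Nat.cast (R := ℂ)) hnat
      push_cast [Nat.cast_sub (by omega : k ≤ m + 1)] at h
      linear_combination h
    linear_combination (-(x ^ (m + 1 - k) * y ^ (m + k))) * hc
  have hRHS : (∑ k ∈ range (m + 1),
        ((m + 1).choose k : ℂ) * ((m : ℂ) + k + 1) * x ^ (m + 1 - k) * y ^ (m + k))
      = (∑ k ∈ range (m + 1), ((m : ℂ) + 1) * (m.choose k : ℂ) * x ^ (m + 1 - k) * y ^ (m + k))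
        + ∑ k ∈ range m, 2 * ((m : ℂ) + 1) * (m.choose k : ℂ) * x ^ (m - k) * y ^ (m + k + 1) := by
    rw [Finset.sum_congr rfl hcoef, Finset.sum_add_distrib]
    congr 1
    rw [Finset.sum_range_succ']
    simp only [Nat.cast_zero, mul_zero, zero_mul, add_zero]
    apply Finset.sum_congr rfl
    intro i hi
    have h1 : ((i : ℂ) + 1) * ((m + 1).choose (i + 1) : ℂ) = ((m : ℂ) + 1) * (m.choose i : ℂ) := by
      have h := congrArg (Nat.cast (R := ℂ)) (Nat.add_one_mul_choose_eq m i)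
      push_cast at h
      linear_combination -h
    have h2 : m + 1 - (i + 1) = m - i := by omega
    rw [h2]
    push_cast
    linear_combination (2 * x ^ (m - i) * y ^ (m + i + 1)) * h1
  have hterm : ∀ k ∈ range (m + 1),
      ((m : ℂ) + 1) * y ^ m * (x + 2 * y) * (y ^ k * x ^ (m - k) * (m.choose k : ℂ))
        = ((m : ℂ) + 1) * (m.choose k : ℂ) * x ^ (m + 1 - k) * y ^ (m + k)
          + 2 * ((m : ℂ) + 1) * (m.choose k : ℂ) * x ^ (m - k) * y ^ (m + k + 1) := by
    intro k hk
    rw [mem_range] at hk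
    have h1 : m + 1 - k = (m - k) + 1 := by omega
    rw [h1, pow_succ, pow_add, pow_add, pow_succ]
    ring
  have expand : ∀ S : ℂ, -((m : ℂ) + 1) * y ^ m * (2 * y ^ (m + 1) - S * (x + 2 * y))
      = (((m : ℂ) + 1) * y ^ m * (x + 2 * y)) * S - 2 * ((m : ℂ) + 1) * y ^ (m + (m + 1)) := by
    intro S
    rw [pow_add]
    ring
  have hB : (∑ k ∈ range (m + 1),
        2 * ((m : ℂ) + 1) * (m.choose k : ℂ) * x ^ (m - k) * y ^ (m + k + 1))
      = (∑ k ∈ range m, 2 * ((m : ℂ) + 1) * (m.choose k : ℂ) * x ^ (m - k) * y ^ (m + k + 1))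
        + 2 * ((m : ℂ) + 1) * y ^ (m + (m + 1)) := by
    rw [Finset.sum_range_succ]
    simp only [Nat.choose_self, Nat.cast_one, Nat.sub_self, pow_zero]
    ring
  rw [expand, hpow, Finset.mul_sum, Finset.sum_congr rfl hterm, Finset.sum_add_distrib, hRHS, hB]
  ring
end

section
/- For every integer p \geq 0, the hypergeometric identity 2F1(1,1; p+2; z) = ((p+1)/z) [\sum_{\ell=0}^{p-1} (1/(p-\ell)) ((z-1)/z)^{\ell} - ((z-1)/z)^p \log(1-z)] holds for all complex z with 0 < |z| < 1. -/
open Polynomial Finset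

noncomputable def hgc (p n : ℕ) : ℂ :=
  ((p+1).factorial : ℂ) * (n.factorial : ℂ) / ((p+1+n).factorial : ℂ)

lemma hgc_zero (p : ℕ) : hgc p 0 = 1 := by
  simp [hgc, Nat.factorial_ne_zero, div_self, Nat.cast_ne_zero]

lemma hgc_norm_le (p n : ℕ) : ‖hgc p n‖ ≤ 1 := by
  rw [hgc, norm_div, norm_mul, Complex.norm_natCast, Complex.norm_natCast,
    Complex.norm_natCast]
  rw [div_le_one (by positivity), ← Nat.cast_mul]
  exact_mod_cast Nat.le_of_dvd (Nat.factorial_pos _)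
    (Nat.factorial_mul_factorial_dvd_factorial_add (p+1) n)

lemma hgc_rec (p n : ℕ) :
    ((p:ℂ)+1) * hgc (p+1) n = ((p:ℂ)+2) * (hgc p n - hgc p (n+1)) := by
  have e1 : (((p+1+1).factorial : ℕ) : ℂ) = ((p:ℂ)+2) * ((p+1).factorial : ℂ) := by
    rw [Nat.factorial_succ]; push_cast; ring
  have e2 : (((p+1+1+n).factorial : ℕ) : ℂ) = ((p:ℂ)+(n:ℂ)+2) * ((p+1+n).factorial : ℂ) := by
    rw [show p+1+1+n = (p+1+n)+1 by omega, Nat.factorial_succ]; push_cast; ring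
  have e3 : (((p+1+(n+1)).factorial : ℕ) : ℂ) = ((p:ℂ)+(n:ℂ)+2) * ((p+1+n).factorial : ℂ) := by
    rw [show p+1+(n+1) = (p+1+n)+1 by omega, Nat.factorial_succ]; push_cast; ring
  have e4 : (((n+1).factorial : ℕ) : ℂ) = ((n:ℂ)+1) * ((n.factorial : ℕ) : ℂ) := by
    rw [Nat.factorial_succ]; push_cast; ring
  have hd : ((p:ℂ)+(n:ℂ)+2) ≠ 0 := by
    have : (((p+n+2 : ℕ)) : ℂ) ≠ 0 := Nat.cast_ne_zero.mpr (by omega)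
    push_cast at this; exact this
  have ha : ((p+1).factorial : ℂ) ≠ 0 := Nat.cast_ne_zero.mpr (Nat.factorial_ne_zero _)
  have hb : ((p+1+n).factorial : ℂ) ≠ 0 := Nat.cast_ne_zero.mpr (Nat.factorial_ne_zero _)
  unfold hgc
  rw [e1, e2, e3, e4]
  field_simp
  ring

lemma hgc_summable (p : ℕ) {z : ℂ} (hz1 : ‖z‖ < 1) :
    Summable (fun n => hgc p n * z ^ n) := by
  apply Summable.of_norm_bounded (summable_geometric_of_lt_one (norm_nonneg z) hz1)
  intro n
  rw [norm_mul, norm_pow]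
  calc ‖hgc p n‖ * ‖z‖ ^ n ≤ 1 * ‖z‖ ^ n := by
        gcongr; exact hgc_norm_le p n
    _ = ‖z‖ ^ n := one_mul _

lemma hgc_hasSum {z : ℂ} (hz0 : z ≠ 0) (hz1 : ‖z‖ < 1) (p : ℕ) :
    HasSum (fun n => hgc p n * z ^ n)
      (((p : ℂ) + 1) / z *
        ((∑ ℓ ∈ Finset.range p, (1 / ((p : ℂ) - ℓ)) * ((z - 1) / z) ^ ℓ) -
          ((z - 1) / z) ^ p * Complex.log (1 - z))) := by
  induction p with
  | zero =>
      have hlog := Complex.hasSum_taylorSeries_neg_log hz1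
      have h2 : HasSum (fun n : ℕ => z ^ (n+1) / ((n+1 : ℕ) : ℂ))
          (-Complex.log (1-z) - ∑ i ∈ Finset.range 1, z ^ i / (i : ℂ)) :=
        (hasSum_nat_add_iff' 1).mpr hlog
      simp only [Finset.range_one, Finset.sum_singleton, Nat.cast_zero, div_zero,
        sub_zero, pow_zero] at h2
      have h3 := h2.mul_left z⁻¹
      have hfe : (fun n : ℕ => hgc 0 n * z ^ n)
          = fun n : ℕ => z⁻¹ * (z ^ (n+1) / ((n+1 : ℕ) : ℂ)) := by
        funext n
        have hn : ((n:ℂ)+1) ≠ 0 := Nat.cast_add_one_ne_zero n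
        have hnf : ((n.factorial : ℕ) : ℂ) ≠ 0 := Nat.cast_ne_zero.mpr (Nat.factorial_ne_zero _)
        rw [hgc, show 0+1+n = n+1 by omega, show (0:ℕ)+1 = 1 from rfl,
          Nat.factorial_one, Nat.factorial_succ n]
        push_cast
        field_simp
        ring
      rw [hfe]
      convert h3 using 1
      exacts [rfl, by simp]
  | succ p ih =>
      set L := Complex.log (1 - z) with hL
      set w := (z - 1)/z with hw
      set A := ∑ ℓ ∈ Finset.range p, (1 / ((p : ℂ) - ℓ)) * w ^ ℓ with hA
      set Rp := ((p:ℂ)+1)/z * (A - w^p * L) with hRp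
      obtain ⟨T, hT⟩ := hgc_summable (p+1) hz1
      have hcomb := ((hT.mul_left (((p:ℂ)+1)*z)).add
        ((ih.mul_left ((p:ℂ)+2)).sub (ih.mul_left (((p:ℂ)+2)*z))))
      have hfun : ∀ n : ℕ, (((p:ℂ)+1)*z) * (hgc (p+1) n * z^n) +
          ((((p:ℂ)+2)) * (hgc p n * z^n) - ((((p:ℂ)+2)*z)) * (hgc p n * z^n))
          = (((p:ℂ)+2) * hgc p n * z^n) - (((p:ℂ)+2) * hgc p (n+1) * z^(n+1)) := by
        intro n
        linear_combination (z^n * z) * hgc_rec p n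
      have hps : ∀ N : ℕ, (∑ n ∈ Finset.range N,
          ((((p:ℂ)+1)*z) * (hgc (p+1) n * z^n) +
          ((((p:ℂ)+2)) * (hgc p n * z^n) - ((((p:ℂ)+2)*z)) * (hgc p n * z^n))))
          = ((p:ℂ)+2) - ((p:ℂ)+2) * hgc p N * z^N := by
        intro N
        rw [Finset.sum_congr rfl (fun n _ => hfun n),
          Finset.sum_range_sub' (fun n => ((p:ℂ)+2) * hgc p n * z^n) N]
        simp [hgc_zero]
      have hnorm : ‖((p:ℂ)+2)‖ = (p:ℝ)+2 := by
        rw [show ((p:ℂ)+2) = ((p+2:ℕ):ℂ) by push_cast; ring, Complex.norm_natCast]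
        push_cast; ring
      have hto : Filter.Tendsto (fun N : ℕ => ((p:ℂ)+2) * hgc p N * z^N)
          Filter.atTop (nhds 0) := by
        have hb : ∀ N : ℕ, ‖((p:ℂ)+2) * hgc p N * z^N‖ ≤ ((p:ℝ)+2) * ‖z‖^N := by
          intro N
          calc ‖((p:ℂ)+2) * hgc p N * z^N‖
              = ‖((p:ℂ)+2)‖ * ‖hgc p N‖ * ‖z‖^N := by rw [norm_mul, norm_mul, norm_pow]
            _ ≤ ((p:ℝ)+2) * 1 * ‖z‖^N := by
                rw [hnorm]; gcongr
                exact hgc_norm_le p N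
            _ = ((p:ℝ)+2) * ‖z‖^N := by ring
        exact squeeze_zero_norm hb (by
          simpa using (tendsto_pow_atTop_nhds_zero_of_lt_one (norm_nonneg z) hz1).const_mul
            ((p:ℝ)+2))
      have h1 : Filter.Tendsto (fun N : ℕ => ∑ n ∈ Finset.range N,
          ((((p:ℂ)+1)*z) * (hgc (p+1) n * z^n) +
          ((((p:ℂ)+2)) * (hgc p n * z^n) - ((((p:ℂ)+2)*z)) * (hgc p n * z^n))))
          Filter.atTop (nhds ((p:ℂ)+2)) := by
        simp only [hps]
        simpa using tendsto_const_nhds.sub hto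
      have hS : (((p:ℂ)+1)*z) * T + (((p:ℂ)+2) * Rp - (((p:ℂ)+2)*z) * Rp) = (p:ℂ)+2 :=
        tendsto_nhds_unique hcomb.tendsto_sum_nat h1
      have hzne : ((p:ℂ)+1) * z ≠ 0 := mul_ne_zero (Nat.cast_add_one_ne_zero p) hz0
      have hA' : (∑ ℓ ∈ Finset.range (p+1), (1 / (((p+1 : ℕ) : ℂ) - ℓ)) * w ^ ℓ)
          = 1/((p:ℂ)+1) + w * A := by
        rw [Finset.sum_range_succ', hA, Finset.mul_sum, add_comm]
        congr 1
        · push_cast; norm_num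
        · apply Finset.sum_congr rfl
          intro i _
          push_cast
          ring
      have hT' : ((p:ℂ)+1)*z*T = ((p:ℂ)+2) - (((p:ℂ)+2) * Rp - ((p:ℂ)+2)*z*Rp) := by
        linear_combination hS
      convert hT using 1
      apply mul_left_cancel₀ hzne
      rw [hA', hT', hRp, hw]
      have hp1 : ((p:ℂ)+1) ≠ 0 := Nat.cast_add_one_ne_zero p
      push_cast
      simp only [div_pow]
      field_simp
      ring

/-- The hypergeometric identity
`₂F₁(1,1;p+2;z) = ((p+1)/z)[∑_{ℓ=0}^{p-1} (1/(p-ℓ)) ((z-1)/z)^ℓ - ((z-1)/z)^p log(1-z)]`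
for `0 < |z| < 1`. -/
theorem hypergeometric_log_identity (p : ℕ) (z : ℂ) (hz0 : 0 < ‖z‖) (hz1 : ‖z‖ < 1) :
    (∑' n : ℕ,
        (ascPochhammer ℂ n).eval 1 * (ascPochhammer ℂ n).eval 1 /
          (ascPochhammer ℂ n).eval ((p : ℂ) + 2) * z ^ n / (Nat.factorial n : ℂ)) =
      ((p : ℂ) + 1) / z *
        ((∑ ℓ ∈ Finset.range p, (1 / ((p : ℂ) - ℓ)) * ((z - 1) / z) ^ ℓ) -
          ((z - 1) / z) ^ p * Complex.log (1 - z)) := by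
  have hz0' : z ≠ 0 := norm_pos_iff.mp hz0
  have key := hgc_hasSum hz0' hz1 p
  rw [← key.tsum_eq]
  apply tsum_congr
  intro n
  have he : ((p+1).factorial : ℂ) * (ascPochhammer ℂ n).eval ((p:ℂ)+2)
      = ((p+1+n).factorial : ℂ) := by
    have h := factorial_mul_ascPochhammer ℂ (p+1) n
    rw [show ((p:ℂ)+2) = (((p+1:ℕ)):ℂ) + 1 by push_cast; ring]
    exact_mod_cast h
  have hQ : ((p+1).factorial : ℂ) ≠ 0 := Nat.cast_ne_zero.mpr (Nat.factorial_ne_zero _)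
  have hF : ((p+1+n).factorial : ℂ) ≠ 0 := Nat.cast_ne_zero.mpr (Nat.factorial_ne_zero _)
  have hev : (ascPochhammer ℂ n).eval ((p:ℂ)+2) ≠ 0 := by
    intro h; rw [h, mul_zero] at he; exact hF he.symm
  have hnf : ((n.factorial : ℕ):ℂ) ≠ 0 := Nat.cast_ne_zero.mpr (Nat.factorial_ne_zero _)
  rw [ascPochhammer_eval_one, hgc]
  field_simp
  linear_combination (-1 : ℂ) * he
end
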